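/- There is a ℂ-algebra isomorphism ℂ[y₁,y₂,y₃]/(4y₁³ + y₃², 2y₂y₃, y₂² + 2y₁y₃) ≅ ℂ[u,v,w]/(w² + 4u³, wv, v² - 8uw) sending y₁ ↦ u, y₂ ↦ (i/2)v, y₃ ↦ w. -/

import Mathlib

open MvPolynomial Complex

noncomputable section

abbrev R3 : Type := MvPolynomial (Fin 3) ℂ

/-- The Jacobian ideal of the `S₁₁` polynomial `x⁴ + y²z + xz²`. -/
def J10a : Ideal R3 :=
  Ideal.span {4 * X 0 ^ 3 + X 2 ^ 2, 2 * X 1 * X 2, X 1 ^ 2 + 2 * X 0 * X 2}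

/-- Presentation of the orbifold Jacobian algebra `Jac(x⁴ + xy⁴ + z², ℤ/2ℤ)`:
relations `w² + 4u³`, `wv`, `v² - 8uw` in variables `u = X 0`, `v = X 1`,
`w = X 2`. -/
def J10b : Ideal R3 :=
  Ideal.span {X 2 ^ 2 + 4 * X 0 ^ 3, X 2 * X 1, X 1 ^ 2 - 8 * X 0 * X 2}

def v10F : Fin 3 → R3 := ![X 0, C (I/2) * X 1, X 2]
def v10G : Fin 3 → R3 := ![X 0, C (-(2*I)) * X 1, X 2]

def F10 : R3 →ₐ[ℂ] R3 ⧸ J10b :=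
  (Ideal.Quotient.mkₐ ℂ J10b).comp (aeval v10F)

def G10 : R3 →ₐ[ℂ] R3 ⧸ J10a :=
  (Ideal.Quotient.mkₐ ℂ J10a).comp (aeval v10G)

lemma vF0 : v10F 0 = X 0 := rfl
lemma vF1 : v10F 1 = C (I/2) * X 1 := rfl
lemma vF2 : v10F 2 = X 2 := rfl
lemma vG0 : v10G 0 = X 0 := rfl
lemma vG1 : v10G 1 = C (-(2*I)) * X 1 := rfl
lemma vG2 : v10G 2 = X 2 := rfl

lemma C2 : ((2 : R3)) = C 2 := (map_ofNat C 2).symm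
lemma C8 : ((8 : R3)) = C 8 := (map_ofNat C 8).symm

lemma hF10 : ∀ a ∈ J10a, F10 a = 0 := by
  have h1 : (X 2 ^ 2 + 4 * X 0 ^ 3 : R3) ∈ J10b := Ideal.subset_span (by simp)
  have h2 : (X 2 * X 1 : R3) ∈ J10b := Ideal.subset_span (by simp)
  have h3 : (X 1 ^ 2 - 8 * X 0 * X 2 : R3) ∈ J10b := Ideal.subset_span (by simp)
  have h : ∀ p ∈ ({4 * X 0 ^ 3 + X 2 ^ 2, 2 * X 1 * X 2, X 1 ^ 2 + 2 * X 0 * X 2} :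
      Set R3), F10 p = 0 := by
    rintro p (rfl | rfl | rfl) <;>
        simp only [F10, AlgHom.comp_apply, Ideal.Quotient.mkₐ_eq_mk] <;>
        rw [Ideal.Quotient.eq_zero_iff_mem]
    · have e : aeval v10F (4 * X 0 ^ 3 + X 2 ^ 2 : R3) = X 2 ^ 2 + 4 * X 0 ^ 3 := by
        simp only [map_add, map_mul, map_pow, map_ofNat, aeval_X, vF0, vF2]
        ring
      rw [e]; exact h1
    · have e : aeval v10F (2 * X 1 * X 2 : R3) = C I * (X 2 * X 1) := by
        simp only [map_mul, map_ofNat, aeval_X, vF1, vF2]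
        rw [C2, show (C (2:ℂ) * (C (I/2) * X 1) * X 2 : R3)
            = (C 2 * C (I/2)) * (X 2 * X 1) by ring, ← map_mul,
          show ((2:ℂ)) * (I/2) = I by ring]
      rw [e]; exact Ideal.mul_mem_left _ _ h2
    · have e : aeval v10F (X 1 ^ 2 + 2 * X 0 * X 2 : R3)
          = C (-(1/4)) * (X 1 ^ 2 - 8 * X 0 * X 2) := by
        simp only [map_add, map_mul, map_pow, map_ofNat, aeval_X, vF0, vF1, vF2]
        have hI : ((I/2 : ℂ))^2 = -(1/4) := by rw [div_pow, I_sq]; norm_num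
        rw [mul_pow, ← map_pow, hI, mul_sub, C8, C2,
          ← mul_assoc, ← mul_assoc, ← map_mul]
        norm_num
      rw [e]; exact Ideal.mul_mem_left _ _ h3
  intro a ha
  refine Submodule.span_induction (fun p hp => h p hp) (map_zero F10)
    (fun x y _ _ hx hy => by rw [map_add, hx, hy, add_zero])
    (fun c x _ hx => by rw [smul_eq_mul, map_mul, hx, mul_zero]) ha

lemma hG10 : ∀ a ∈ J10b, G10 a = 0 := by
  have h1 : (4 * X 0 ^ 3 + X 2 ^ 2 : R3) ∈ J10a := Ideal.subset_span (by simp)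
  have h2 : (2 * X 1 * X 2 : R3) ∈ J10a := Ideal.subset_span (by simp)
  have h3 : (X 1 ^ 2 + 2 * X 0 * X 2 : R3) ∈ J10a := Ideal.subset_span (by simp)
  have h : ∀ p ∈ ({X 2 ^ 2 + 4 * X 0 ^ 3, X 2 * X 1, X 1 ^ 2 - 8 * X 0 * X 2} :
      Set R3), G10 p = 0 := by
    rintro p (rfl | rfl | rfl) <;>
        simp only [G10, AlgHom.comp_apply, Ideal.Quotient.mkₐ_eq_mk] <;>
        rw [Ideal.Quotient.eq_zero_iff_mem]
    · have e : aeval v10G (X 2 ^ 2 + 4 * X 0 ^ 3 : R3) = 4 * X 0 ^ 3 + X 2 ^ 2 := by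
        simp only [map_add, map_mul, map_pow, map_ofNat, aeval_X, vG0, vG2]
        ring
      rw [e]; exact h1
    · have e : aeval v10G (X 2 * X 1 : R3) = C (-I) * (2 * X 1 * X 2) := by
        simp only [map_mul, aeval_X, vG1, vG2]
        rw [show (X 2 * (C (-(2*I)) * X 1) : R3) = C (-(2*I)) * (X 1 * X 2) by ring,
          C2, show (C (-I) * (C (2:ℂ) * X 1 * X 2) : R3)
            = (C (-I) * C 2) * (X 1 * X 2) by ring, ← map_mul,
          show ((-I)) * (2:ℂ) = -(2*I) by ring]
      rw [e]; exact Ideal.mul_mem_left _ _ h2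
    · have e : aeval v10G (X 1 ^ 2 - 8 * X 0 * X 2 : R3)
          = C (-4) * (X 1 ^ 2 + 2 * X 0 * X 2) := by
        simp only [map_sub, map_mul, map_pow, map_ofNat, aeval_X, vG0, vG1, vG2]
        have hI : ((-(2*I) : ℂ))^2 = -4 := by rw [neg_sq, mul_pow, I_sq]; norm_num
        rw [mul_pow, ← map_pow, hI, mul_add, C8, C2,
          ← mul_assoc, ← mul_assoc, ← map_mul,
          show (C (-4:ℂ) * X 1 ^ 2 - C ((8:ℂ)) * X 0 * X 2 : R3)
            = C (-4) * X 1 ^ 2 + (-C ((8:ℂ))) * X 0 * X 2 by ring, ← map_neg]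
        norm_num
      rw [e]; exact Ideal.mul_mem_left _ _ h3
  intro a ha
  refine Submodule.span_induction (fun p hp => h p hp) (map_zero G10)
    (fun x y _ _ hx hy => by rw [map_add, hx, hy, add_zero])
    (fun c x _ hx => by rw [smul_eq_mul, map_mul, hx, mul_zero]) ha

lemma F10_X0 : F10 (X 0) = Ideal.Quotient.mk J10b (X 0) := by
  simp only [F10, AlgHom.comp_apply, aeval_X, vF0, Ideal.Quotient.mkₐ_eq_mk]
lemma F10_X1 : F10 (X 1) = Ideal.Quotient.mk J10b (C (I/2) * X 1) := by
  simp only [F10, AlgHom.comp_apply, aeval_X, vF1, Ideal.Quotient.mkₐ_eq_mk]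
lemma F10_X2 : F10 (X 2) = Ideal.Quotient.mk J10b (X 2) := by
  simp only [F10, AlgHom.comp_apply, aeval_X, vF2, Ideal.Quotient.mkₐ_eq_mk]
lemma G10_X0 : G10 (X 0) = Ideal.Quotient.mk J10a (X 0) := by
  simp only [G10, AlgHom.comp_apply, aeval_X, vG0, Ideal.Quotient.mkₐ_eq_mk]
lemma G10_X1 : G10 (X 1) = Ideal.Quotient.mk J10a (C (-(2*I)) * X 1) := by
  simp only [G10, AlgHom.comp_apply, aeval_X, vG1, Ideal.Quotient.mkₐ_eq_mk]
lemma G10_X2 : G10 (X 2) = Ideal.Quotient.mk J10a (X 2) := by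
  simp only [G10, AlgHom.comp_apply, aeval_X, vG2, Ideal.Quotient.mkₐ_eq_mk]

lemma liftₐ_mk10 {I J : Ideal R3} (f : R3 →ₐ[ℂ] R3 ⧸ J) (hI : ∀ a ∈ I, f a = 0) (a : R3) :
    Ideal.Quotient.liftₐ I f hI (Ideal.Quotient.mk I a) = f a := rfl

def e10 : (R3 ⧸ J10a) ≃ₐ[ℂ] (R3 ⧸ J10b) :=
  AlgEquiv.ofAlgHom (Ideal.Quotient.liftₐ J10a F10 hF10) (Ideal.Quotient.liftₐ J10b G10 hG10)
    (by
      apply Ideal.Quotient.algHom_ext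
      apply MvPolynomial.algHom_ext
      intro i
      fin_cases i
      · show Ideal.Quotient.liftₐ J10a F10 hF10 (G10 (X 0)) = Ideal.Quotient.mk J10b (X 0)
        rw [G10_X0, liftₐ_mk10,
          F10_X0]
      · show Ideal.Quotient.liftₐ J10a F10 hF10 (G10 (X 1)) = Ideal.Quotient.mk J10b (X 1)
        rw [G10_X1, liftₐ_mk10,
          map_mul, F10_X1]
        have hc : F10 (C (-(2*I))) = Ideal.Quotient.mk J10b (C (-(2*I))) := by
          simp only [F10, AlgHom.comp_apply, aeval_C, Ideal.Quotient.mkₐ_eq_mk, algebraMap_eq]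
        rw [hc, ← map_mul, ← mul_assoc, ← map_mul,
          show ((-(2*I) : ℂ)) * (I/2) = 1 by
            rw [show ((-(2*I) : ℂ)) * (I/2) = -(I^2) by ring, I_sq]; norm_num,
          map_one, one_mul]
      · show Ideal.Quotient.liftₐ J10a F10 hF10 (G10 (X 2)) = Ideal.Quotient.mk J10b (X 2)
        rw [G10_X2, liftₐ_mk10,
          F10_X2])
    (by
      apply Ideal.Quotient.algHom_ext
      apply MvPolynomial.algHom_ext
      intro i
      fin_cases i
      · show Ideal.Quotient.liftₐ J10b G10 hG10 (F10 (X 0)) = Ideal.Quotient.mk J10a (X 0)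
        rw [F10_X0, liftₐ_mk10,
          G10_X0]
      · show Ideal.Quotient.liftₐ J10b G10 hG10 (F10 (X 1)) = Ideal.Quotient.mk J10a (X 1)
        rw [F10_X1, liftₐ_mk10,
          map_mul, G10_X1]
        have hc : G10 (C (I/2)) = Ideal.Quotient.mk J10a (C (I/2)) := by
          simp only [G10, AlgHom.comp_apply, aeval_C, Ideal.Quotient.mkₐ_eq_mk, algebraMap_eq]
        rw [hc, ← map_mul, ← mul_assoc, ← map_mul,
          show ((I/2 : ℂ)) * (-(2*I)) = 1 by
            rw [show ((I/2 : ℂ)) * (-(2*I)) = -(I^2) by ring, I_sq]; norm_num,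
          map_one, one_mul]
      · show Ideal.Quotient.liftₐ J10b G10 hG10 (F10 (X 2)) = Ideal.Quotient.mk J10a (X 2)
        rw [F10_X2, liftₐ_mk10,
          G10_X2])


/-- There is a `ℂ`-algebra isomorphism
`ℂ[y₁,y₂,y₃]/(4y₁³+y₃², 2y₂y₃, y₂²+2y₁y₃) ≅ ℂ[u,v,w]/(w²+4u³, wv, v²-8uw)`
sending `y₁ ↦ u`, `y₂ ↦ (i/2)v`, `y₃ ↦ w`. -/
theorem stmt10 :
    ∃ e : (R3 ⧸ J10a) ≃ₐ[ℂ] (R3 ⧸ J10b),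
      e (Ideal.Quotient.mk J10a (X 0)) = Ideal.Quotient.mk J10b (X 0) ∧
      e (Ideal.Quotient.mk J10a (X 1)) = (I / 2) • Ideal.Quotient.mk J10b (X 1) ∧
      e (Ideal.Quotient.mk J10a (X 2)) = Ideal.Quotient.mk J10b (X 2) := by
  have key : ∀ p : R3, e10 (Ideal.Quotient.mk J10a p) = F10 p := fun p => rfl
  refine ⟨e10, ?_, ?_, ?_⟩
  · rw [key, F10_X0]
  · rw [key, F10_X1, ← smul_eq_C_mul, ← Ideal.Quotient.mkₐ_eq_mk ℂ, map_smul,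
      Ideal.Quotient.mkₐ_eq_mk]
  · rw [key, F10_X2]
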